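/- Let n ≥ 2 be an integer. There is a constant C, depending only on n, such that for every δ ∈ (0,1]: ∫₀¹ ∫₀¹ r · t^{2n−3} · (δ + r + t²)^{−(n+1)} dr dt ≤ C · (1 + |log δ|). -/

import Mathlib

open MeasureTheory

lemma inner_bound_aux (a : ℝ) (ha : 0 < a) :
    (∫ r in Set.Ioo (0:ℝ) 1, ((a + r)^2)⁻¹) ≤ a⁻¹ := by
  have h01 : (0:ℝ) ≤ 1 := by norm_num
  have hkey : (∫ r in (0:ℝ)..1, ((a + r)^2)⁻¹) = -(a+1)⁻¹ - -(a+0)⁻¹ := by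
    refine intervalIntegral.integral_eq_sub_of_hasDerivAt
      (f := fun y : ℝ => -(a+y)⁻¹) ?_ ?_
    · intro x hx
      rw [Set.uIcc_of_le h01] at hx
      have hx0 : 0 ≤ x := hx.1
      have hne : a + x ≠ 0 := by positivity
      have h1 : HasDerivAt (fun y : ℝ => a + y) 1 x := (hasDerivAt_id x).const_add a
      have h2 := (h1.inv hne).neg
      convert h2 using 1
      · rfl
      · rw [neg_div, neg_neg, one_div]
    · apply ContinuousOn.intervalIntegrable
      rw [Set.uIcc_of_le h01]
      apply ContinuousOn.inv₀
      · exact (((continuous_const.add continuous_id).pow 2)).continuousOn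
      · intro x hx
        have hx0 : 0 ≤ x := hx.1
        positivity
  have hIoo : (∫ r in Set.Ioo (0:ℝ) 1, ((a + r)^2)⁻¹)
      = ∫ r in (0:ℝ)..1, ((a + r)^2)⁻¹ := by
    rw [intervalIntegral.integral_of_le h01, MeasureTheory.integral_Ioc_eq_integral_Ioo]
  rw [hIoo, hkey]
  have h1 : 0 ≤ (a+1)⁻¹ := by positivity
  have h2 : -(a+0)⁻¹ = -a⁻¹ := by norm_num
  linarith

lemma outer_val_aux (δ : ℝ) (hδ : 0 < δ) :
    (∫ t in Set.Ioo (0:ℝ) 1, t * (δ + t^2)⁻¹)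
      = (1/2) * Real.log (δ + 1) - (1/2) * Real.log (δ + 0^2) := by
  have h01 : (0:ℝ) ≤ 1 := by norm_num
  have hIoo : (∫ t in Set.Ioo (0:ℝ) 1, t * (δ + t^2)⁻¹)
      = ∫ t in (0:ℝ)..1, t * (δ + t^2)⁻¹ := by
    rw [intervalIntegral.integral_of_le h01, MeasureTheory.integral_Ioc_eq_integral_Ioo]
  rw [hIoo]
  have hkey : (∫ t in (0:ℝ)..1, t * (δ + t^2)⁻¹)
      = (1/2) * Real.log (δ + 1^2) - (1/2) * Real.log (δ + 0^2) := by
    refine intervalIntegral.integral_eq_sub_of_hasDerivAt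
      (f := fun y : ℝ => (1/2) * Real.log (δ + y^2)) ?_ ?_
    · intro x hx
      have hne : δ + x^2 ≠ 0 := by positivity
      have h1 : HasDerivAt (fun y : ℝ => δ + y^2) (2*x) x := by
        have := (hasDerivAt_pow 2 x).const_add δ
        simpa using this
      have h2 := (h1.log hne).const_mul (1/2 : ℝ)
      convert h2 using 1
      · rfl
      · ring
    · apply ContinuousOn.intervalIntegrable
      apply ContinuousOn.mul continuous_id.continuousOn
      apply ContinuousOn.inv₀ ((continuous_const.add (continuous_pow 2)).continuousOn)
      intro x _
      show δ + x^2 ≠ 0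
      positivity
  rw [hkey]
  norm_num

/-- the model integral `∫₀¹∫₀¹ r t^{2n−3} (δ+r+t²)^{-(n+1)} dr dt`
is bounded by `C · (1 + |log δ|)`, uniformly for `δ ∈ (0,1]`. -/
theorem model_integral_log_volume (n : ℕ) (hn : 2 ≤ n) :
    ∃ C : ℝ, 0 < C ∧ ∀ δ : ℝ, 0 < δ → δ ≤ 1 →
      (∫ t in Set.Ioo (0 : ℝ) 1, ∫ r in Set.Ioo (0 : ℝ) 1,
          r * t ^ (2 * n - 3) / (δ + r + t ^ 2) ^ (n + 1))
        ≤ C * (1 + |Real.log δ|) := by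
  refine ⟨1, one_pos, fun δ hδ0 hδ1 => ?_⟩
  -- the majorant for the outer integral
  set g : ℝ → ℝ := fun t => t * (δ + t^2)⁻¹ with hg
  have hgc : Continuous g := by
    apply continuous_id.mul
    apply Continuous.inv₀ (continuous_const.add (continuous_pow 2))
    intro x; show δ + x^2 ≠ 0; positivity
  have hgint : IntegrableOn g (Set.Ioo (0:ℝ) 1) volume :=
    (hgc.integrableOn_Icc).mono_set Set.Ioo_subset_Icc_self
  have hstep1 : (∫ t in Set.Ioo (0 : ℝ) 1, ∫ r in Set.Ioo (0 : ℝ) 1,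
          r * t ^ (2 * n - 3) / (δ + r + t ^ 2) ^ (n + 1))
      ≤ ∫ t in Set.Ioo (0 : ℝ) 1, g t := by
    apply integral_mono_of_nonneg
    · filter_upwards [ae_restrict_mem measurableSet_Ioo] with t ht
      apply setIntegral_nonneg measurableSet_Ioo
      intro r hr
      have ht0 : 0 < t := ht.1
      have hr0 : 0 < r := hr.1
      positivity
    · exact hgint
    · filter_upwards [ae_restrict_mem measurableSet_Ioo] with t ht
      have ht0 : 0 < t := ht.1
      have ha : 0 < δ + t^2 := by positivity
      -- bound the inner integral
      have hbd : (∫ r in Set.Ioo (0 : ℝ) 1,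
            r * t ^ (2 * n - 3) / (δ + r + t ^ 2) ^ (n + 1))
          ≤ ∫ r in Set.Ioo (0 : ℝ) 1, t * (((δ + t^2) + r)^2)⁻¹ := by
        apply integral_mono_of_nonneg
        · filter_upwards [ae_restrict_mem measurableSet_Ioo] with r hr
          have hr0 : 0 < r := hr.1
          positivity
        · apply IntegrableOn.mono_set _ Set.Ioo_subset_Icc_self
          apply ContinuousOn.integrableOn_Icc
          apply ContinuousOn.mul continuousOn_const
          apply ContinuousOn.inv₀
          · exact ((continuous_const.add continuous_id).pow 2).continuousOn
          · intro r hr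
            have hr0 : 0 ≤ r := hr.1
            positivity
        · filter_upwards [ae_restrict_mem measurableSet_Ioo] with r hr
          have hr0 : 0 < r := hr.1
          have hD : 0 < δ + r + t^2 := by positivity
          set D : ℝ := δ + r + t^2 with hDdef
          have hDeq : (δ + t^2) + r = D := by rw [hDdef]; ring
          have ht2D : t^2 ≤ D := by rw [hDdef]; nlinarith
          have hrD : r ≤ D := by rw [hDdef]; nlinarith
          -- r * t^(2n-3) ≤ t * D^(n-1)
          have e1 : t^(2*n-3) = (t^2)^(n-2) * t := by
            rw [← pow_mul, ← pow_succ]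
            congr 1
            omega
          have h1 : r * t^(2*n-3) ≤ t * D^(n-1) := by
            rw [e1]
            have h2 : (t^2)^(n-2) ≤ D^(n-2) := pow_le_pow_left₀ (sq_nonneg t) ht2D _
            have h3 : r * ((t^2)^(n-2) * t) ≤ D * (D^(n-2) * t) := by
              apply mul_le_mul hrD _ (by positivity) hD.le
              exact mul_le_mul_of_nonneg_right h2 ht0.le
            have h4 : D * (D^(n-2) * t) = t * D^(n-1) := by
              rw [show n - 1 = (n-2) + 1 by omega, pow_succ]
              ring
            linarith [h3, h4 ▸ h3]
          have hpow : D^(n+1) = D^(n-1) * D^2 := by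
            rw [← pow_add]
            congr 1
            omega
          calc r * t ^ (2 * n - 3) / D ^ (n + 1)
              ≤ t * D^(n-1) / D^(n+1) := by
                apply div_le_div_of_nonneg_right h1 (by positivity)
            _ = t * (D^2)⁻¹ := by
                rw [hpow]
                have hD1 : D^(n-1) ≠ 0 := by positivity
                have hD2 : (D:ℝ)^2 ≠ 0 := by positivity
                field_simp
            _ = t * (((δ + t^2) + r)^2)⁻¹ := by rw [hDeq]
      refine hbd.trans ?_
      rw [integral_const_mul]
      calc t * ∫ r in Set.Ioo (0:ℝ) 1, (((δ + t^2) + r)^2)⁻¹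
          ≤ t * (δ + t^2)⁻¹ :=
            mul_le_mul_of_nonneg_left (inner_bound_aux (δ + t^2) ha) ht0.le
        _ = g t := rfl
  have hval := outer_val_aux δ hδ0
  have hlog1 : Real.log (δ + 1) ≤ δ := by
    have := Real.add_one_le_exp (Real.log (δ+1))
    have h := Real.log_le_sub_one_of_pos (by linarith : (0:ℝ) < δ + 1)
    linarith
  have habs : |Real.log δ| = -Real.log δ :=
    abs_of_nonpos (Real.log_nonpos hδ0.le hδ1)
  have h0sq : Real.log (δ + 0^2) = Real.log δ := by norm_num
  calc (∫ t in Set.Ioo (0 : ℝ) 1, ∫ r in Set.Ioo (0 : ℝ) 1,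
          r * t ^ (2 * n - 3) / (δ + r + t ^ 2) ^ (n + 1))
      ≤ ∫ t in Set.Ioo (0 : ℝ) 1, g t := hstep1
    _ = (1/2) * Real.log (δ + 1) - (1/2) * Real.log (δ + 0^2) := hval
    _ ≤ 1 * (1 + |Real.log δ|) := by
        rw [h0sq, habs, one_mul]
        have hlog0 : Real.log δ ≤ 0 := Real.log_nonpos hδ0.le hδ1
        linarith
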